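/- arXiv:1111.5137 — 3 statements merged into one kernel-verified Lean document; each statement's English description precedes it below -/
import Mathlib

section
/- Let C₁ > 0, C₂ > 0 and l ≥ 1, and define Φ(x) = C₁·exp(C₂·x^l / l) for x ≥ 0 with fixed-point set S = {x ≥ 0 : x = Φ(x)}. If C₁ < (e·C₂)^{−1/l}, then S is nonempty and inf S < C₁·e^{1/l}. Consequently the sequence B₀ = 0, B_{n+1} = Φ(B_n) converges to a finite limit B_∞ satisfying B_∞ < C₁·e^{1/l}. -/
/-- For `Φ(x) = C₁ exp(C₂ x^l / l)` with `C₁, C₂ > 0`, `l ≥ 1`: if `C₁ < (e C₂)^{-1/l}`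
then the fixed-point set `S = {x ≥ 0 : x = Φ(x)}` is nonempty with `inf S < C₁ e^{1/l}`,
and the sequence `B₀ = 0`, `B_{n+1} = Φ(B_n)` converges to a finite limit `B_∞ < C₁ e^{1/l}`. -/
theorem stmt_2 (C₁ C₂ l : ℝ) (hC₁ : 0 < C₁) (hC₂ : 0 < C₂) (hl : 1 ≤ l)
    (Φ : ℝ → ℝ) (hΦ : ∀ x : ℝ, Φ x = C₁ * Real.exp (C₂ * x ^ l / l))
    (S : Set ℝ) (hS : S = {x : ℝ | 0 ≤ x ∧ x = Φ x})
    (B : ℕ → ℝ) (hB0 : B 0 = 0) (hB : ∀ n : ℕ, B (n + 1) = Φ (B n))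
    (hsmall : C₁ < (Real.exp 1 * C₂) ^ (-(1 / l))) :
    S.Nonempty ∧ sInf S < C₁ * Real.exp (1 / l) ∧
    ∃ Binf : ℝ, Filter.Tendsto B Filter.atTop (nhds Binf) ∧
      Binf < C₁ * Real.exp (1 / l) := by
  have lpos : 0 < l := lt_of_lt_of_le one_pos hl
  have lne : l ≠ 0 := lpos.ne'
  set M := C₁ * Real.exp (1 / l) with hM
  have hMpos : 0 < M := mul_pos hC₁ (Real.exp_pos _)
  -- M^l = C₁^l * e
  have hMl : M ^ l = C₁ ^ l * Real.exp 1 := by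
    rw [hM, Real.mul_rpow hC₁.le (Real.exp_pos _).le, ← Real.exp_one_rpow (1 / l),
      ← Real.rpow_mul (Real.exp_pos 1).le, one_div_mul_cancel lne, Real.rpow_one]
  -- key smallness: C₂ * M^l < 1
  have hC₁l : C₁ ^ l < ((Real.exp 1 * C₂) ^ (-(1 / l))) ^ l :=
    Real.rpow_lt_rpow hC₁.le hsmall lpos
  have hpow : ((Real.exp 1 * C₂) ^ (-(1 / l))) ^ l = (Real.exp 1 * C₂)⁻¹ := by
    rw [← Real.rpow_mul (by positivity : (0:ℝ) ≤ Real.exp 1 * C₂)]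
    have : -(1 / l) * l = -1 := by field_simp
    rw [this, Real.rpow_neg_one]
  have hkey : C₂ * M ^ l < 1 := by
    rw [hMl]
    have h1 : C₂ * (C₁ ^ l * Real.exp 1) < C₂ * ((Real.exp 1 * C₂)⁻¹ * Real.exp 1) := by
      apply mul_lt_mul_of_pos_left _ hC₂
      exact mul_lt_mul_of_pos_right (hpow ▸ hC₁l) (Real.exp_pos 1)
    have h2 : C₂ * ((Real.exp 1 * C₂)⁻¹ * Real.exp 1) = 1 := by
      field_simp
    linarith
  have hΦM : Φ M < M := by
    rw [hΦ, hM]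
    apply mul_lt_mul_of_pos_left _ hC₁
    apply Real.exp_lt_exp.mpr
    rw [div_lt_div_iff₀ lpos lpos]
    have := hkey
    nlinarith
  -- Φ positive and monotone on nonneg
  have hΦpos : ∀ x, 0 < Φ x := fun x => by rw [hΦ]; positivity
  have hΦmono : ∀ x y, 0 ≤ x → x ≤ y → Φ x ≤ Φ y := by
    intro x y hx hxy
    rw [hΦ, hΦ]
    gcongr
  have hBnonneg : ∀ n, 0 ≤ B n := by
    intro n
    cases n with
    | zero => rw [hB0]
    | succ k => rw [hB]; exact (hΦpos _).le
  have hBlt : ∀ n, B n < M := by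
    intro n
    induction n with
    | zero => rw [hB0]; exact hMpos
    | succ k ih =>
      rw [hB]
      exact lt_of_le_of_lt (hΦmono _ _ (hBnonneg k) ih.le) hΦM
  have hmono : Monotone B := by
    apply monotone_nat_of_le_succ
    intro n
    induction n with
    | zero => rw [hB0]; exact hBnonneg 1
    | succ k ih =>
      have ih' : B k ≤ Φ (B k) := (hB k) ▸ ih
      rw [hB (k+1), hB k]
      exact hΦmono _ _ (hBnonneg k) ih'
  have hbdd : BddAbove (Set.range B) := ⟨M, by rintro _ ⟨n, rfl⟩; exact (hBlt n).le⟩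
  set Binf := ⨆ n, B n with hBinf
  have htend : Filter.Tendsto B Filter.atTop (nhds Binf) := tendsto_atTop_ciSup hmono hbdd
  have hBinfM : Binf ≤ M := ciSup_le fun n => (hBlt n).le
  have hBinf0 : 0 ≤ Binf := hB0 ▸ le_ciSup hbdd 0
  -- fixed point
  have hcontΦ : ContinuousAt Φ Binf := by
    have h1 : ContinuousAt (fun x : ℝ => x ^ l) Binf :=
      Real.continuousAt_rpow_const Binf l (Or.inr lpos.le)
    have : ContinuousAt (fun x : ℝ => C₁ * Real.exp (C₂ * x ^ l / l)) Binf := by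
      fun_prop
    exact this.congr (Filter.Eventually.of_forall fun x => (hΦ x).symm)
  have hfix : Φ Binf = Binf := by
    have h1 : Filter.Tendsto (fun n => B (n + 1)) Filter.atTop (nhds Binf) :=
      htend.comp (Filter.tendsto_add_atTop_nat 1)
    have h2 : Filter.Tendsto (fun n => Φ (B n)) Filter.atTop (nhds (Φ Binf)) :=
      hcontΦ.tendsto.comp htend
    have h3 : (fun n => B (n + 1)) = fun n => Φ (B n) := funext fun n => hB n
    rw [h3] at h1
    exact tendsto_nhds_unique h2 h1
  have hBinfltM : Binf < M := by
    rcases lt_or_eq_of_le hBinfM with h | h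
    · exact h
    · exfalso; rw [h] at hfix; linarith [hΦM, hfix]
  have hmem : Binf ∈ S := by rw [hS]; exact ⟨hBinf0, hfix.symm⟩
  have hSbdd : BddBelow S := ⟨0, fun x hx => by rw [hS] at hx; exact hx.1⟩
  refine ⟨⟨Binf, hmem⟩, lt_of_le_of_lt (csInf_le hSbdd hmem) hBinfltM, Binf, htend, hBinfltM⟩
end

section
/- Let C₁ > 0, C₂ > 0 and l ≥ 1, and define Φ(x) = C₁·exp(C₂·x^l / l) for x ≥ 0. If the fixed-point set S = {x ≥ 0 : x = Φ(x)} consists of exactly one element x̃, then necessarily x̃ = C₁·e^{1/l} and C₁ = (e·C₂)^{−1/l}. -/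
set_option maxHeartbeats 1000000 in
/-- For `Φ(x) = C₁ exp(C₂ x^l / l)` with `C₁, C₂ > 0`, `l ≥ 1`: if the fixed-point set
`{x ≥ 0 : x = Φ(x)}` consists of exactly one element `x̃`, then `x̃ = C₁ e^{1/l}` and
`C₁ = (e C₂)^{-1/l}`. -/
theorem stmt_3 (C₁ C₂ l : ℝ) (hC₁ : 0 < C₁) (hC₂ : 0 < C₂) (hl : 1 ≤ l)
    (Φ : ℝ → ℝ) (hΦ : ∀ x : ℝ, Φ x = C₁ * Real.exp (C₂ * x ^ l / l))
    (xt : ℝ) (hunique : {x : ℝ | 0 ≤ x ∧ x = Φ x} = {xt}) :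
    xt = C₁ * Real.exp (1 / l) ∧ C₁ = (Real.exp 1 * C₂) ^ (-(1 / l)) := by
  have hl0 : (0:ℝ) < l := lt_of_lt_of_le one_pos hl
  have hlne : l ≠ 0 := ne_of_gt hl0
  -- membership characterization
  have hmem : ∀ a : ℝ, 0 ≤ a → a = Φ a → a = xt := by
    intro a h1 h2
    have : a ∈ ({xt} : Set ℝ) := by
      rw [← hunique]; exact ⟨h1, h2⟩
    exact this
  -- xt is a fixed point
  have hxt : 0 ≤ xt ∧ xt = Φ xt := by
    have : xt ∈ ({xt} : Set ℝ) := rfl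
    rw [← hunique] at this; exact this
  have hxtfix : xt = C₁ * Real.exp (C₂ * xt ^ l / l) := by
    rw [← hΦ xt]; exact hxt.2
  have hxtpos : 0 < xt := by
    rw [hxtfix]; positivity
  -- continuity of Φ
  have hcontΦ : Continuous Φ := by
    have hfun : Φ = fun x => C₁ * Real.exp (C₂ * x ^ l / l) := funext hΦ
    rw [hfun]
    have h1 : Continuous fun x : ℝ => x ^ l := by
      rw [continuous_iff_continuousAt]
      intro x
      exact Real.continuousAt_rpow_const x l (Or.inr hl0.le)
    exact continuous_const.mul (Real.continuous_exp.comp ((continuous_const.mul h1).div_const l))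
  -- the critical point x₀
  set x₀ : ℝ := C₂ ^ (-(1/l)) with hx₀def
  have hx₀pos : 0 < x₀ := Real.rpow_pos_of_pos hC₂ _
  have hx₀l : x₀ ^ l = C₂⁻¹ := by
    rw [hx₀def, ← Real.rpow_mul hC₂.le, neg_mul, one_div_mul_cancel hlne,
      Real.rpow_neg_one]
  -- main claim: tangency
  have ht : C₂ * xt ^ l = 1 := by
    by_contra ht
    -- strict log inequality gives l log C₁ + log C₂ < -1
    have htpos : 0 < C₂ * xt ^ l := by positivity
    have hlog1 : Real.log (C₂ * xt ^ l) < C₂ * xt ^ l - 1 :=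
      Real.log_lt_sub_one_of_pos htpos ht
    have hlogxt : Real.log xt = Real.log C₁ + C₂ * xt ^ l / l := by
      conv_lhs => rw [hxtfix]
      rw [Real.log_mul (ne_of_gt hC₁) (Real.exp_ne_zero _), Real.log_exp]
    have hlogmul : Real.log (C₂ * xt ^ l) = Real.log C₂ + l * Real.log xt := by
      rw [Real.log_mul (ne_of_gt hC₂) (by positivity), Real.log_rpow hxtpos]
    have key : l * Real.log C₁ + Real.log C₂ < -1 := by
      rw [hlogmul, hlogxt] at hlog1
      have : l * (C₂ * xt ^ l / l) = C₂ * xt ^ l := by field_simp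
      nlinarith [hlog1]
    -- so Φ x₀ < x₀
    have hΦx₀ : Φ x₀ < x₀ := by
      rw [hΦ, hx₀l]
      have h2 : C₂ * C₂⁻¹ = 1 := mul_inv_cancel₀ (ne_of_gt hC₂)
      rw [h2]
      have hlhs : 0 < C₁ * Real.exp (1 / l) := by positivity
      rw [← Real.exp_log hlhs, ← Real.exp_log hx₀pos]
      apply Real.exp_lt_exp.mpr
      rw [Real.log_mul (ne_of_gt hC₁) (Real.exp_ne_zero _), Real.log_exp,
        hx₀def, Real.log_rpow hC₂]
      have h2 : (l * Real.log C₁ + Real.log C₂)/l < (-1)/l :=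
        (div_lt_div_iff_of_pos_right hl0).mpr key
      have e1 : (l * Real.log C₁ + Real.log C₂)/l = Real.log C₁ + Real.log C₂/l := by
        field_simp
      have e2 : -(1/l) * Real.log C₂ = -(Real.log C₂/l) := by ring
      have e3 : (-1:ℝ)/l = -(1/l) := by ring
      rw [e1, e3] at h2
      linarith [h2]
    -- a fixed point in [0, x₀]
    have hΦ0 : 0 < Φ 0 := by
      rw [hΦ]; positivity
    obtain ⟨a, ha_mem, ha⟩ : ∃ a ∈ Set.Icc (0:ℝ) x₀, Φ a - a = 0 := by
      have hc : ContinuousOn (fun x => Φ x - x) (Set.Icc 0 x₀) :=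
        (hcontΦ.sub continuous_id).continuousOn
      have := intermediate_value_Icc' (le_of_lt hx₀pos) hc
        (Set.mem_Icc.mpr ⟨show Φ x₀ - x₀ ≤ 0 by linarith [hΦx₀],
          show (0:ℝ) ≤ Φ 0 - 0 by linarith [hΦ0]⟩)
      obtain ⟨a, ha1, ha2⟩ := this
      exact ⟨a, ha1, ha2⟩
    -- a large point V with Φ V ≥ V
    obtain ⟨V, hVx₀, hΦV⟩ : ∃ V : ℝ, x₀ ≤ V ∧ V ≤ Φ V := by
      refine ⟨max (max x₀ 1) (4*l^2/(C₁*C₂^2)), le_max_of_le_left (le_max_left _ _), ?_⟩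
      set V := max (max x₀ 1) (4*l^2/(C₁*C₂^2)) with hVdef
      have hV1 : 1 ≤ V := le_max_of_le_left (le_max_right _ _)
      have hV4 : 4*l^2/(C₁*C₂^2) ≤ V := le_max_right _ _
      have hV4' : 4*l^2 ≤ C₁*C₂^2*V := by
        rw [div_le_iff₀ (by positivity)] at hV4
        linarith [hV4]
      have hVl : V ≤ V ^ l := by
        calc V = V ^ (1:ℝ) := (Real.rpow_one V).symm
        _ ≤ V ^ l := Real.rpow_le_rpow_of_exponent_le hV1 hl
      rw [hΦ V]
      set t : ℝ := C₂ * V ^ l / l with htdef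
      have ht0 : 0 ≤ t := by positivity
      have he1 : t/2 ≤ Real.exp (t/2) := by
        linarith [Real.add_one_le_exp (t/2)]
      have he2 : (t/2)^2 ≤ Real.exp t := by
        have : Real.exp t = Real.exp (t/2) * Real.exp (t/2) := by
          rw [← Real.exp_add]; ring_nf
        rw [this, sq]
        exact mul_le_mul he1 he1 (by linarith) (Real.exp_nonneg _)
      have hVpos : (0:ℝ) < V := lt_of_lt_of_le one_pos hV1
      have hlt : l * t = C₂ * V ^ l := by rw [htdef]; field_simp
      have h5 : C₂ * V ≤ l * t := by
        rw [hlt]; gcongr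
      have h6 : (C₂*V)^2 ≤ (l*t)^2 := by
        have h0 : (0:ℝ) ≤ C₂ * V := by positivity
        rw [sq, sq]
        exact mul_le_mul h5 h5 h0 (by positivity)
      have h9 : l^2*(4*V) ≤ l^2*(C₁*t^2) := by
        nlinarith [hV4', mul_le_mul_of_nonneg_left h6 hC₁.le, hVpos]
      have h8 : 4*V ≤ C₁*t^2 := le_of_mul_le_mul_left h9 (by positivity)
      nlinarith [mul_le_mul_of_nonneg_left he2 hC₁.le, h8]
    obtain ⟨b, hb_mem, hb⟩ : ∃ b ∈ Set.Icc x₀ V, Φ b - b = 0 := by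
      have hc : ContinuousOn (fun x => Φ x - x) (Set.Icc x₀ V) :=
        (hcontΦ.sub continuous_id).continuousOn
      have := intermediate_value_Icc hVx₀ hc
        (Set.mem_Icc.mpr ⟨show Φ x₀ - x₀ ≤ 0 by linarith [hΦx₀],
          show (0:ℝ) ≤ Φ V - V by linarith [hΦV]⟩)
      obtain ⟨b, hb1, hb2⟩ := this
      exact ⟨b, hb1, hb2⟩
    -- both a, b equal xt, hence xt = x₀, contradiction
    have ha_xt : a = xt := hmem a ha_mem.1 (by linarith [ha])
    have hb_xt : b = xt := hmem b (le_trans hx₀pos.le hb_mem.1) (by linarith [hb])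
    have : xt = x₀ := le_antisymm (ha_xt ▸ ha_mem.2) (hb_xt ▸ hb_mem.1)
    rw [← this] at hΦx₀
    rw [← hxt.2] at hΦx₀
    exact absurd hΦx₀ (lt_irrefl xt)
  -- now the tangency case
  have h1 : xt = C₁ * Real.exp (1 / l) := by
    rw [hxtfix, ht]
  refine ⟨h1, ?_⟩
  -- xt ^ l = C₂⁻¹
  have hxl : xt ^ l = C₂⁻¹ := by
    field_simp at ht ⊢
    linarith [ht]
  have hexp : (Real.exp (1/l)) ^ l = Real.exp 1 := by
    rw [Real.rpow_def_of_pos (Real.exp_pos _), Real.log_exp, one_div_mul_cancel hlne]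
  have hC₁l : C₁ ^ l = (Real.exp 1 * C₂)⁻¹ := by
    have : xt ^ l = C₁ ^ l * Real.exp 1 := by
      rw [h1, Real.mul_rpow hC₁.le (Real.exp_nonneg _), hexp]
    rw [hxl] at this
    rw [mul_inv]
    field_simp at this ⊢
    linarith [this]
  calc C₁ = (C₁ ^ l) ^ (1/l) := by
        rw [← Real.rpow_mul hC₁.le, mul_one_div, div_self hlne, Real.rpow_one]
  _ = ((Real.exp 1 * C₂)⁻¹) ^ (1/l) := by rw [hC₁l]
  _ = (Real.exp 1 * C₂) ^ (-(1/l)) := by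
        rw [Real.rpow_neg (by positivity), ← Real.inv_rpow (by positivity)]
end

section
/- Let φ : [0,∞) → [0,∞) be a continuous increasing function and let C ≥ 0, M_σ ≥ 0, K_g ≥ 0, K_{f,x} ≥ 0, K_{f,y} ≥ 0, K_b ≥ 0, K_σ ≥ 0, K_{f,z} ≥ 0 be constants. For T > 0 define Ψ_T(x) = 1 + C·exp(K_{f,y}T)·M_σ·(K_g + K_{f,x}T)·exp( K_σ²T + (K_b + K_σ(K_{f,z} + 2φ(x)))²·T² ). Then there exists T₀ > 0 such that for every T ∈ (0, T₀], the map Ψ_T has at least one fixed point in (0,∞), and the set of its fixed points in [0,∞) has a smallest element. -/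
/-- For `Ψ_T(x) = 1 + C e^{K_{f,y} T} M_σ (K_g + K_{f,x} T)
exp(K_σ² T + (K_b + K_σ (K_{f,z} + 2 φ(x)))² T²)` with `φ : [0,∞) → [0,∞)` continuous
and increasing, there exists `T₀ > 0` such that for every `T ∈ (0, T₀]` the map `Ψ_T`
has a fixed point in `(0,∞)`, and its set of fixed points in `[0,∞)` has a smallest
element. -/
theorem stmt_12 (φ : ℝ → ℝ) (hφc : ContinuousOn φ (Set.Ici 0))
    (hφm : MonotoneOn φ (Set.Ici 0)) (hφ0 : ∀ x : ℝ, 0 ≤ x → 0 ≤ φ x)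
    (C Mσ Kg Kfx Kfy Kb Kσ Kfz : ℝ)
    (hC : 0 ≤ C) (hMσ : 0 ≤ Mσ) (hKg : 0 ≤ Kg) (hKfx : 0 ≤ Kfx) (hKfy : 0 ≤ Kfy)
    (hKb : 0 ≤ Kb) (hKσ : 0 ≤ Kσ) (hKfz : 0 ≤ Kfz)
    (Ψ : ℝ → ℝ → ℝ)
    (hΨ : ∀ T x : ℝ, Ψ T x = 1 + C * Real.exp (Kfy * T) * Mσ * (Kg + Kfx * T) *
        Real.exp (Kσ ^ 2 * T + (Kb + Kσ * (Kfz + 2 * φ x)) ^ 2 * T ^ 2)) :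
    ∃ T₀ : ℝ, 0 < T₀ ∧ ∀ T : ℝ, 0 < T → T ≤ T₀ →
      (∃ x : ℝ, 0 < x ∧ Ψ T x = x) ∧
      (∃ m : ℝ, IsLeast {x : ℝ | 0 ≤ x ∧ Ψ T x = x} m) := by
  set xs : ℝ := 2 + C * Mσ * Kg with hxs
  have hxsnn : 0 ≤ xs := by positivity
  set D : ℝ := Kb + Kσ * (Kfz + 2 * φ xs) with hD
  set f : ℝ → ℝ := fun t => 1 + C * Real.exp (Kfy * t) * Mσ * (Kg + Kfx * t) *
      Real.exp (Kσ ^ 2 * t + D ^ 2 * t ^ 2) with hf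
  have hfΨ : ∀ t : ℝ, Ψ t xs = f t := by
    intro t
    rw [hΨ, hf]
  have hfc : Continuous f := by fun_prop
  have hf0 : f 0 < xs := by
    have : f 0 = 1 + C * Mσ * Kg := by
      simp [hf, Real.exp_zero]
    rw [this, hxs]
    linarith
  have hev : ∀ᶠ t in nhds (0 : ℝ), f t < xs :=
    (hfc.continuousAt).eventually_lt continuousAt_const hf0
  rw [Metric.eventually_nhds_iff] at hev
  obtain ⟨ε, hε, hball⟩ := hev
  refine ⟨ε / 2, by linarith, fun T hT hTle => ?_⟩
  have hT0 : 0 ≤ T := hT.le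
  have hfT : f T < xs := by
    apply hball
    rw [Real.dist_eq, sub_zero, abs_of_nonneg hT0]
    linarith
  -- continuity of Ψ T on [0, ∞)
  have hΨc : ContinuousOn (Ψ T) (Set.Ici 0) := by
    have h1 : ContinuousOn (fun x : ℝ => 1 + C * Real.exp (Kfy * T) * Mσ * (Kg + Kfx * T) *
        Real.exp (Kσ ^ 2 * T + (Kb + Kσ * (Kfz + 2 * φ x)) ^ 2 * T ^ 2)) (Set.Ici 0) := by
      fun_prop
    exact h1.congr fun x hx => hΨ T x
  -- Ψ T x ≥ 1 for all x
  have hΨge : ∀ x : ℝ, 1 ≤ Ψ T x := by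
    intro x
    rw [hΨ]
    have h1 : 0 ≤ Kg + Kfx * T := by positivity
    have h2 : 0 ≤ C * Real.exp (Kfy * T) * Mσ * (Kg + Kfx * T) *
        Real.exp (Kσ ^ 2 * T + (Kb + Kσ * (Kfz + 2 * φ x)) ^ 2 * T ^ 2) := by positivity
    linarith
  -- IVT on [0, xs]
  set g : ℝ → ℝ := fun x => Ψ T x - x with hg
  have hgc : ContinuousOn g (Set.Icc 0 xs) :=
    ((hΨc.mono (Set.Icc_subset_Ici_self)).sub continuousOn_id)
  have hmem : (0 : ℝ) ∈ Set.Icc (g xs) (g 0) := by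
    constructor
    · have := hfΨ T
      simp only [hg]
      linarith
    · have := hΨge 0
      simp only [hg]
      linarith
  have himage := intermediate_value_Icc' hxsnn hgc hmem
  obtain ⟨x, hxI, hx0⟩ := himage
  have hfix : Ψ T x = x := by
    have : Ψ T x - x = 0 := hx0
    linarith
  have hxpos : 0 < x := by
    have := hΨge x
    linarith [hfix ▸ this]
  refine ⟨⟨x, hxpos, hfix⟩, ?_⟩
  -- least fixed point
  set S : Set ℝ := {y : ℝ | 0 ≤ y ∧ Ψ T y = y} with hS
  have hSne : S.Nonempty := ⟨x, hxpos.le, hfix⟩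
  have hSbdd : BddBelow S := ⟨0, fun y hy => hy.1⟩
  have hSclosed : IsClosed S := by
    have hgc' : ContinuousOn (fun y => Ψ T y - y) (Set.Ici 0) :=
      hΨc.sub continuousOn_id
    have hkey : IsClosed (Set.Ici (0 : ℝ) ∩ (fun y => Ψ T y - y) ⁻¹' {0}) :=
      hgc'.preimage_isClosed_of_isClosed isClosed_Ici isClosed_singleton
    have : S = Set.Ici (0 : ℝ) ∩ (fun y => Ψ T y - y) ⁻¹' {0} := by
      ext y
      simp [hS, sub_eq_zero, Set.mem_Ici]
    rw [this]
    exact hkey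
  exact ⟨sInf S, hSclosed.csInf_mem hSne hSbdd, fun y hy => csInf_le hSbdd hy⟩
end
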